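/- The map C₋ has a fixed point with eigenvalues e^{±iπ/2} (i.e. the differential at the fixed point has trace 0 and determinant 1) if and only if M₁² = (4/27)·M₂·(M₂ - 3)². -/
import Mathlib


/-- `C₋` has a fixed point with eigenvalues `e^{±iπ/2}` (the differential at the
fixed point `(y₀,y₀)` has trace `M₂ - 3y₀² = 0` and determinant 1) iff
`M₁² = (4/27) M₂ (M₂-3)²`. -/
theorem cubic_henon_minus_res14_curve (M₁ M₂ : ℝ) :
    (∃ y₀ : ℝ, -y₀ ^ 3 + (M₂ - 2) * y₀ + M₁ = 0 ∧ M₂ - 3 * y₀ ^ 2 = 0) ↔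
      M₁ ^ 2 = 4 / 27 * M₂ * (M₂ - 3) ^ 2 := by
  constructor
  · rintro ⟨y, h1, h2⟩
    have hM2 : M₂ = 3 * y ^ 2 := by linarith
    subst hM2
    have hm1 : M₁ = 2 * y - 2 * y ^ 3 := by linear_combination h1
    linear_combination (M₁ + 2 * y - 2 * y ^ 3) * hm1
  · intro h
    by_cases hM : M₂ = 3
    · refine ⟨1, ?_, ?_⟩ <;> subst hM <;> nlinarith
    · set c : ℝ := 2 - 2 * M₂ / 3 with hcdef
      have hc : c ≠ 0 := by
        intro hc
        apply hM
        rw [hcdef] at hc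
        linarith
      have hy : (M₁ / c) ^ 2 = M₂ / 3 := by
        rw [div_pow, div_eq_div_iff (pow_ne_zero 2 hc) (by norm_num)]
        have h3 : (M₂ - 3) ≠ 0 := sub_ne_zero.mpr hM
        rw [hcdef]
        linear_combination 3 * h
      have hcy : c * (M₁ / c) = M₁ := by field_simp
      refine ⟨M₁ / c, ?_, ?_⟩
      · linear_combination (-(M₁ / c)) * hy - hcy
      · linarith [hy]
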